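/- Suppose β ∈ C(S) satisfies ‖β‖ ≤ ‖v‖ for every v ∈ C(S) (i.e. β is the point of C(S) closest to the origin) and β ≠ 0. Then the directed graph G(S) contains no directed loops. -/

import Mathlib

/-- If β is the (nonzero) point of C(S) = convexHull {e_i - e_j : (i,j) ∈ S}
closest to the origin, then the directed graph G(S) contains no directed loops. -/
theorem stmt0 {V : Type*} [NormedAddCommGroup V] [InnerProductSpace ℝ V]
    (n : ℕ) (hn : 1 ≤ n) (e : Fin (n + 1) → V)
    (he : ∀ i, e i ≠ 0)
    (horth : ∀ i j, i ≠ j → inner ℝ (e i) (e j) = (0 : ℝ))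
    (S : Finset (Fin (n + 1) × Fin (n + 1))) (hS : S.Nonempty)
    (β : V)
    (hmem : β ∈ convexHull ℝ
      ((fun p : Fin (n + 1) × Fin (n + 1) => e p.1 - e p.2) '' ↑S))
    (hmin : ∀ v ∈ convexHull ℝ
      ((fun p : Fin (n + 1) × Fin (n + 1) => e p.1 - e p.2) '' ↑S), ‖β‖ ≤ ‖v‖)
    (hβ : β ≠ 0) :
    ¬ ∃ (r : ℕ) (p : ℕ → Fin (n + 1)),
        1 ≤ r ∧ p r = p 0 ∧ ∀ l < r, (p l, p (l + 1)) ∈ S := by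
  rintro ⟨r, p, hr, hpr, hp⟩
  have h0 : (0 : V) ∈ convexHull ℝ
      ((fun q : Fin (n + 1) × Fin (n + 1) => e q.1 - e q.2) '' ↑S) := by
    have hconv := convex_convexHull ℝ
      ((fun q : Fin (n + 1) × Fin (n + 1) => e q.1 - e q.2) '' (S : Set _))
    have hsum : ∑ l ∈ Finset.range r, ((r : ℝ)⁻¹) • (e (p l) - e (p (l + 1))) = 0 := by
      rw [← Finset.smul_sum, Finset.sum_range_sub' (fun l => e (p l)), hpr]
      simp
    rw [← hsum]
    refine hconv.sum_mem (fun i _ => by positivity) ?_ ?_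
    · rw [Finset.sum_const, Finset.card_range, nsmul_eq_mul]
      field_simp
    · intro i hi
      exact subset_convexHull ℝ _ ⟨(p i, p (i + 1)), hp i (Finset.mem_range.mp hi), rfl⟩
  have := hmin 0 h0
  simp at this
  exact hβ this
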